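/- Let S and T be compatible digraphs (same vertex set, disjoint edge sets) such that every directed cut of G = S ∪ T has at least two edges in S. If the underlying undirected graph S⁻ contains a cycle C, and E(S₁) can be partitioned into two dijoins of G₁ = G/E(C) where S₁ is the digraph of S-edges surviving contraction, then E(S) can be partitioned into two dijoins of G: indeed, orienting C and taking A₂ = forward edges of C, B₂ = backward edges of C, the sets A₁ ∪ A₂ and B₁ ∪ B₂ are disjoint dijoins of G whenever A₁, B₁ partition E(S₁) into two dijoins of G₁. -/
import Mathlib


/-- Edges leaving `X` (tail in `X`, head outside `X`). -/
def dicut {V E : Type} (tl hd : E → V) (X : Set V) : Set E :=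
  {e | tl e ∈ X ∧ hd e ∉ X}

/-- `X` is an outset: nonempty, proper, and no edge enters `X`. -/
def IsOutset {V E : Type} (tl hd : E → V) (X : Set V) : Prop :=
  X ≠ ∅ ∧ X ≠ Set.univ ∧ ∀ e, hd e ∈ X → tl e ∈ X

/-- A dijoin meets every directed cut. -/
def IsDijoin {V E : Type} (tl hd : E → V) (D : Set E) : Prop :=
  ∀ X : Set V, IsOutset tl hd X → (D ∩ dicut tl hd X).Nonempty

/-- `S` has edges `ES` (tail `tS`, head `hS`), `T` has edges `ET`;
`G = S ∪ T` has edge type `ES ⊕ ET`.  Every directed cut of `G` has at least two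
`S`-edges.  `C` is a cycle of `S⁻` with vertices `c i` and edges `ce i` joining
`c i` to `c (i+1)`.  If `A₁, B₁` partition the `S`-edges off the cycle into two
dijoins of `G₁ = G/E(C)` (cuts of `G₁` = cuts of `G` at sets containing the cycle
vertices all on one side), then with `A₂` the forward cycle edges and `B₂` the
backward ones, `A₁ ∪ A₂` and `B₁ ∪ B₂` are disjoint dijoins of `G` partitioning `E(S)`. -/

private lemma zmod_all {n : ℕ} (hn : 0 < n) (P : ZMod n → Prop)
    (h : ∀ i, P i → P (i + 1)) {k : ZMod n} (hk : P k) : ∀ m, P m := by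
  haveI : NeZero n := ⟨hn.ne'⟩
  have step : ∀ j : ℕ, P (k + (j : ZMod n)) := by
    intro j
    induction j with
    | zero => simpa using hk
    | succ j ih =>
      have := h _ ih
      have heq : k + ((j + 1 : ℕ) : ZMod n) = k + (j : ZMod n) + 1 := by push_cast; ring
      rwa [heq]
  intro m
  have hcast : (((m - k).val : ℕ) : ZMod n) = m - k := ZMod.natCast_rightInverse (m - k)
  have := step (m - k).val
  rwa [hcast, add_sub_cancel] at this

private lemma zmod_step {n : ℕ} (hn : 0 < n) (P : ZMod n → Prop)
    {k m : ZMod n} (hk : P k) (hm : ¬ P m) : ∃ i, P i ∧ ¬ P (i + 1) := by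
  by_contra hcon
  push_neg at hcon
  exact hm (zmod_all hn P hcon hk m)

theorem stmt2 {V ES ET : Type} [Fintype V] [Fintype ES] [Fintype ET]
    (tS hS : ES → V) (tT hT : ET → V)
    (hcut2 : ∀ X : Set V, IsOutset (Sum.elim tS tT) (Sum.elim hS hT) X →
      ∃ e f : ES, e ≠ f ∧
        (Sum.inl e : ES ⊕ ET) ∈ dicut (Sum.elim tS tT) (Sum.elim hS hT) X ∧
        (Sum.inl f : ES ⊕ ET) ∈ dicut (Sum.elim tS tT) (Sum.elim hS hT) X)
    -- the cycle C of S⁻ :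
    (n : ℕ) (hn : 0 < n) (c : ZMod n → V) (hcinj : Function.Injective c)
    (ce : ZMod n → ES) (hceinj : Function.Injective ce)
    (hends : ∀ i : ZMod n, (tS (ce i) = c i ∧ hS (ce i) = c (i + 1)) ∨
                           (tS (ce i) = c (i + 1) ∧ hS (ce i) = c i))
    -- A₁, B₁ partition E(S₁) = E(S) \ E(C) into two dijoins of G₁ = G/E(C) :
    (A₁ B₁ : Set ES)
    (hU : A₁ ∪ B₁ = {e : ES | e ∉ Set.range ce}) (hI : A₁ ∩ B₁ = ∅)
    (hA₁d : ∀ X : Set V, X ≠ ∅ → X ≠ Set.univ →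
      (Set.range c ⊆ X ∨ Disjoint (Set.range c) X) →
      (∀ e : ES ⊕ ET, Sum.elim hS hT e ∈ X → Sum.elim tS tT e ∈ X) →
      ∃ e ∈ A₁, tS e ∈ X ∧ hS e ∉ X)
    (hB₁d : ∀ X : Set V, X ≠ ∅ → X ≠ Set.univ →
      (Set.range c ⊆ X ∨ Disjoint (Set.range c) X) →
      (∀ e : ES ⊕ ET, Sum.elim hS hT e ∈ X → Sum.elim tS tT e ∈ X) →
      ∃ e ∈ B₁, tS e ∈ X ∧ hS e ∉ X) :
    -- conclusion, with A₂ the forward edges of C and B₂ the backward ones: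
    (A₁ ∪ {e : ES | ∃ i, e = ce i ∧ tS e = c i ∧ hS e = c (i + 1)}) ∩
      (B₁ ∪ (Set.range ce \ {e : ES | ∃ i, e = ce i ∧ tS e = c i ∧ hS e = c (i + 1)})) = ∅ ∧
    (A₁ ∪ {e : ES | ∃ i, e = ce i ∧ tS e = c i ∧ hS e = c (i + 1)}) ∪
      (B₁ ∪ (Set.range ce \ {e : ES | ∃ i, e = ce i ∧ tS e = c i ∧ hS e = c (i + 1)})) = Set.univ ∧
    IsDijoin (Sum.elim tS tT) (Sum.elim hS hT)
      (Sum.inl '' (A₁ ∪ {e : ES | ∃ i, e = ce i ∧ tS e = c i ∧ hS e = c (i + 1)})) ∧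
    IsDijoin (Sum.elim tS tT) (Sum.elim hS hT)
      (Sum.inl '' (B₁ ∪ (Set.range ce \ {e : ES | ∃ i, e = ce i ∧ tS e = c i ∧ hS e = c (i + 1)}))) := by
  set A₂ : Set ES := {e : ES | ∃ i, e = ce i ∧ tS e = c i ∧ hS e = c (i + 1)} with hA₂
  have hA₁r : ∀ e ∈ A₁, e ∉ Set.range ce := by
    intro e he
    have : e ∈ A₁ ∪ B₁ := Or.inl he
    rwa [hU] at this
  have hB₁r : ∀ e ∈ B₁, e ∉ Set.range ce := by
    intro e he
    have : e ∈ A₁ ∪ B₁ := Or.inr he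
    rwa [hU] at this
  have hA₂r : ∀ e ∈ A₂, e ∈ Set.range ce := by
    rintro e ⟨i, rfl, -, -⟩; exact ⟨i, rfl⟩
  refine ⟨?_, ?_, ?_, ?_⟩
  · ext e
    simp only [Set.mem_inter_iff, Set.mem_union, Set.mem_empty_iff_false, iff_false]
    rintro ⟨h1 | h1, h2 | h2⟩
    · exact Set.eq_empty_iff_forall_notMem.mp hI e ⟨h1, h2⟩
    · obtain ⟨y, hy⟩ := h2.1
      exact hA₁r e h1 ⟨y, hy⟩
    · exact hB₁r e h2 (hA₂r e h1)
    · exact h2.2 h1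
  · ext e
    simp only [Set.mem_union, Set.mem_univ, iff_true]
    by_cases hm : e ∈ Set.range ce
    · by_cases ha : e ∈ A₂
      · exact Or.inl (Or.inr ha)
      · exact Or.inr (Or.inr ⟨hm, ha⟩)
    · have : e ∈ A₁ ∪ B₁ := by rw [hU]; exact hm
      rcases this with h | h
      · exact Or.inl (Or.inl h)
      · exact Or.inr (Or.inl h)
  · rintro X ⟨hX1, hX2, hX3⟩
    by_cases hc : Set.range c ⊆ X ∨ Disjoint (Set.range c) X
    · obtain ⟨e, he, ht, hh⟩ := hA₁d X hX1 hX2 hc hX3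
      exact ⟨Sum.inl e, ⟨e, Or.inl he, rfl⟩, ht, hh⟩
    · push_neg at hc
      obtain ⟨hns, hnd⟩ := hc
      obtain ⟨v, hv1, hv2⟩ := Set.not_subset.mp hns
      obtain ⟨_, ⟨⟨k, rfl⟩, hk⟩⟩ := Set.not_disjoint_iff.mp hnd
      obtain ⟨m, rfl⟩ := hv1
      obtain ⟨i, hi, hi1⟩ := zmod_step hn (fun i => c i ∈ X) hk hv2
      rcases hends i with ⟨ht, hh⟩ | ⟨ht, hh⟩
      · refine ⟨Sum.inl (ce i), ⟨ce i, Or.inr ⟨i, rfl, ht, hh⟩, rfl⟩, ?_, ?_⟩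
        · simpa [ht] using hi
        · simpa [hh] using hi1
      · exfalso
        have := hX3 (Sum.inl (ce i)) (by simpa [hh] using hi)
        simp only [Sum.elim_inl, ht] at this
        exact hi1 this
  · rintro X ⟨hX1, hX2, hX3⟩
    by_cases hc : Set.range c ⊆ X ∨ Disjoint (Set.range c) X
    · obtain ⟨e, he, ht, hh⟩ := hB₁d X hX1 hX2 hc hX3
      exact ⟨Sum.inl e, ⟨e, Or.inl he, rfl⟩, ht, hh⟩
    · push_neg at hc
      obtain ⟨hns, hnd⟩ := hc
      obtain ⟨v, hv1, hv2⟩ := Set.not_subset.mp hns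
      obtain ⟨_, ⟨⟨k, rfl⟩, hk⟩⟩ := Set.not_disjoint_iff.mp hnd
      obtain ⟨m, rfl⟩ := hv1
      obtain ⟨i, hi, hi1⟩ := zmod_step hn (fun i => c i ∉ X) hv2 (not_not_intro hk)
      simp only [not_not] at hi1
      rcases hends i with ⟨ht, hh⟩ | ⟨ht, hh⟩
      · exfalso
        have := hX3 (Sum.inl (ce i)) (by simpa [hh] using hi1)
        simp only [Sum.elim_inl, ht] at this
        exact hi this
      · have hnA₂ : ce i ∉ A₂ := by
          rintro ⟨j, hj, htj, hhj⟩
          have hij : i = j := hceinj hj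
          subst hij
          have : c (i + 1) = c i := by rw [← ht, htj]
          exact hi (this ▸ hi1)
        refine ⟨Sum.inl (ce i), ⟨ce i, Or.inr ⟨⟨i, rfl⟩, hnA₂⟩, rfl⟩, ?_, ?_⟩
        · simpa [ht] using hi1
        · simpa [hh] using hi
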